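/- (Modified Jarzynski equality for different initial temperatures, Theorem 2.) With Δβ = β_B − β_S, one has Σ_i (exp(−β_S ε_i)/Z_S0)·exp(−β_S W̃(i)) = exp(−β_S ΔF_S)·exp(−D)·exp(−Δβ·Q̃); moreover, by Jensen's inequality, Σ_i (exp(−β_S ε_i)/Z_S0)·W̃(i) ≥ ΔF_S + β_S⁻¹·D + (Δβ/β_S)·Q̃. -/

import Mathlib

open Matrix Kronecker BigOperators Finset

noncomputable section

/-- Partial trace over the bath (second tensor factor). -/
def ptraceB {n m : ℕ} (X : Matrix (Fin n × Fin m) (Fin n × Fin m) ℂ) :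
    Matrix (Fin n) (Fin n) ℂ :=
  Matrix.of fun i i' => ∑ j, X (i, j) (i', j)

/-- Outer product `|v⟩⟨v|`. -/
def outer {k : ℕ} (v : Fin k → ℂ) : Matrix (Fin k) (Fin k) ℂ :=
  Matrix.vecMulVec v (star v)

/-- Partition function `Z = Tr exp (−β H)` (real part of the trace). -/
def Zpart (β : ℝ) {k : ℕ} (H : Matrix (Fin k) (Fin k) ℂ) : ℝ :=
  (NormedSpace.exp ((-β) • H)).trace.re

/-- Gibbs state `exp (−β H) / Z`. -/
def gibbs (β : ℝ) {k : ℕ} (H : Matrix (Fin k) (Fin k) ℂ) : Matrix (Fin k) (Fin k) ℂ :=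
  ((Zpart β H : ℂ)⁻¹) • NormedSpace.exp ((-β) • H)

/-- The channel `Φ(ρ) = Tr_B [U (ρ ⊗ τB) U†]`. -/
def channel {n m : ℕ} (U : Matrix (Fin n × Fin m) (Fin n × Fin m) ℂ)
    (τB : Matrix (Fin m) (Fin m) ℂ) (ρ : Matrix (Fin n) (Fin n) ℂ) :
    Matrix (Fin n) (Fin n) ℂ :=
  ptraceB (U * (ρ ⊗ₖ τB) * Uᴴ)

section eig
variable {k : ℕ} (β : ℝ) (H : Matrix (Fin k) (Fin k) ℂ) (v : Fin k → Fin k → ℂ) (ε : Fin k → ℝ)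

lemma exp_eigen
    (hv : ∀ i i', ∑ x, (starRingEnd ℂ) (v i x) * v i' x = if i = i' then 1 else 0)
    (heig : ∀ i, H *ᵥ v i = (ε i : ℂ) • v i) :
    NormedSpace.exp ((-β) • H)
      = (Matrix.of fun x i => v i x) * Matrix.diagonal (fun i => (Real.exp (-(β * ε i)) : ℂ))
          * (Matrix.of fun x i => v i x)ᴴ := by
  set P : Matrix (Fin k) (Fin k) ℂ := Matrix.of fun x i => v i x with hP
  have hPP : Pᴴ * P = 1 := by
    ext i i'
    simp only [Matrix.mul_apply, Matrix.conjTranspose_apply, hP, Matrix.of_apply,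
      Matrix.one_apply]
    exact hv i i'
  have hPP' : P * Pᴴ = 1 := mul_eq_one_comm.mp hPP
  have hUnit : IsUnit P := Matrix.isUnit_iff_isUnit_det P |>.mpr
    (Matrix.isUnit_det_of_right_inverse hPP')
  have hInv : P⁻¹ = Pᴴ := Matrix.inv_eq_left_inv hPP
  have hHP : H * P = P * Matrix.diagonal (fun i => ((ε i : ℂ))) := by
    ext x i
    have h1 : (H * P) x i = (H *ᵥ v i) x := by
      simp [Matrix.mul_apply, Matrix.mulVec, dotProduct, hP]
    rw [Matrix.mul_diagonal, h1, heig i]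
    simp [hP]
    ring
  have hH : H = P * Matrix.diagonal (fun i => ((ε i : ℂ))) * P⁻¹ := by
    rw [hInv]
    calc H = H * (P * Pᴴ) := by rw [hPP', mul_one]
    _ = (H * P) * Pᴴ := by rw [mul_assoc]
    _ = P * Matrix.diagonal (fun i => ((ε i : ℂ))) * Pᴴ := by rw [hHP]
  have hsmul : (-β) • H = P * Matrix.diagonal (fun i => ((-(β * ε i) : ℝ) : ℂ)) * P⁻¹ := by
    rw [hH]
    have h2 : P * ((-β : ℝ) • Matrix.diagonal (fun i => ((ε i : ℂ)))) * P⁻¹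
        = (-β : ℝ) • (P * Matrix.diagonal (fun i => ((ε i : ℂ))) * P⁻¹) := by
      rw [Matrix.mul_smul, Matrix.smul_mul]
    rw [← h2]
    congr 2
    ext i j
    simp only [Matrix.smul_apply, Matrix.diagonal_apply]
    split
    · simp [Complex.real_smul]
    · simp
  rw [hsmul, Matrix.exp_conj P _ hUnit, Matrix.exp_diagonal, hInv]
  rw [Pi.exp_def]
  simp [← Complex.exp_eq_exp_ℂ, Complex.ofReal_exp]

lemma trace_exp_eigen
    (hv : ∀ i i', ∑ x, (starRingEnd ℂ) (v i x) * v i' x = if i = i' then 1 else 0)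
    (heig : ∀ i, H *ᵥ v i = (ε i : ℂ) • v i) :
    (NormedSpace.exp ((-β) • H)).trace = ((∑ i, Real.exp (-(β * ε i)) : ℝ) : ℂ) := by
  rw [exp_eigen β H v ε hv heig]
  set P : Matrix (Fin k) (Fin k) ℂ := Matrix.of fun x i => v i x with hP
  have hPP : Pᴴ * P = 1 := by
    ext i i'
    simp only [Matrix.mul_apply, Matrix.conjTranspose_apply, hP, Matrix.of_apply,
      Matrix.one_apply]
    exact hv i i'
  rw [Matrix.trace_mul_cycle, hPP, Matrix.one_mul, Matrix.trace_diagonal]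
  push_cast
  rfl

lemma trace_mul_exp_eigen
    (hv : ∀ i i', ∑ x, (starRingEnd ℂ) (v i x) * v i' x = if i = i' then 1 else 0)
    (heig : ∀ i, H *ᵥ v i = (ε i : ℂ) • v i) :
    (H * NormedSpace.exp ((-β) • H)).trace
      = ((∑ i, ε i * Real.exp (-(β * ε i)) : ℝ) : ℂ) := by
  rw [exp_eigen β H v ε hv heig]
  set P : Matrix (Fin k) (Fin k) ℂ := Matrix.of fun x i => v i x with hP
  have hPP : Pᴴ * P = 1 := by
    ext i i'
    simp only [Matrix.mul_apply, Matrix.conjTranspose_apply, hP, Matrix.of_apply,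
      Matrix.one_apply]
    exact hv i i'
  have hHP : H * P = P * Matrix.diagonal (fun i => ((ε i : ℂ))) := by
    ext x i
    have h1 : (H * P) x i = (H *ᵥ v i) x := by
      simp [Matrix.mul_apply, Matrix.mulVec, dotProduct, hP]
    rw [Matrix.mul_diagonal, h1, heig i]
    simp [hP]
    ring
  calc (H * (P * Matrix.diagonal (fun i => (Real.exp (-(β * ε i)) : ℂ)) * Pᴴ)).trace
      = ((H * P) * Matrix.diagonal (fun i => (Real.exp (-(β * ε i)) : ℂ)) * Pᴴ).trace := by
        rw [← Matrix.mul_assoc, ← Matrix.mul_assoc]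
    _ = (P * (Matrix.diagonal (fun i => ((ε i : ℂ))) * Matrix.diagonal
          (fun i => (Real.exp (-(β * ε i)) : ℂ))) * Pᴴ).trace := by
        rw [hHP, Matrix.mul_assoc P]
    _ = (Pᴴ * P * (Matrix.diagonal (fun i => ((ε i : ℂ))) * Matrix.diagonal
          (fun i => (Real.exp (-(β * ε i)) : ℂ)))).trace := by
        rw [Matrix.trace_mul_cycle, Matrix.mul_assoc]
    _ = ((∑ i, ε i * Real.exp (-(β * ε i)) : ℝ) : ℂ) := by
        rw [hPP, Matrix.one_mul, Matrix.diagonal_mul_diagonal, Matrix.trace_diagonal]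
        push_cast
        rfl

end eig

lemma trace_kron_left {n m : ℕ} (A : Matrix (Fin n) (Fin n) ℂ)
    (X : Matrix (Fin n × Fin m) (Fin n × Fin m) ℂ) :
    ((A ⊗ₖ (1 : Matrix (Fin m) (Fin m) ℂ)) * X).trace = (A * ptraceB X).trace := by
  simp only [Matrix.trace, Matrix.diag, Matrix.mul_apply, ptraceB, Matrix.of_apply,
    Matrix.kroneckerMap_apply, Matrix.one_apply, Fintype.sum_prod_type,
    ite_mul, one_mul, zero_mul, mul_ite, mul_zero, mul_one, Finset.mul_sum,
    Finset.sum_ite_eq, Finset.sum_ite_eq', Finset.mem_univ, if_true]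
  exact Finset.sum_congr rfl fun x _ => Finset.sum_comm

theorem different_temperatures_jarzynski
    (n m : ℕ) (hn : 1 ≤ n) (hm : 1 ≤ m)
    (βS βB : ℝ) (hβS : 0 < βS) (hβB : 0 < βB)
    (HS0 HSt : Matrix (Fin n) (Fin n) ℂ)
    (hHS0 : HS0.IsHermitian) (hHSt : HSt.IsHermitian)
    (HB : Matrix (Fin m) (Fin m) ℂ) (hHB : HB.IsHermitian)
    (e : Fin n → Fin n → ℂ) (ε : Fin n → ℝ)
    (he : ∀ i i', ∑ x, (starRingEnd ℂ) (e i x) * e i' x = if i = i' then 1 else 0)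
    (heig : ∀ i, HS0 *ᵥ e i = (ε i : ℂ) • e i)
    (f : Fin m → Fin m → ℂ) (q : Fin m → ℝ)
    (hf : ∀ j j', ∑ x, (starRingEnd ℂ) (f j x) * f j' x = if j = j' then 1 else 0)
    (hfeig : ∀ j, HB *ᵥ f j = (q j : ℂ) • f j)
    (U : Matrix (Fin n × Fin m) (Fin n × Fin m) ℂ)
    (hU : U ∈ Matrix.unitaryGroup (Fin n × Fin m) ℂ)
    (Δβ : ℝ) (hΔβ : Δβ = βB - βS)
    (E : Fin n → ℝ)
    (hE : ∀ i, E i = ((HSt * channel U (gibbs βB HB) (outer (e i))).trace).re)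
    (Zt : ℝ) (hZt : Zt = ∑ i, Real.exp (-(βS * E i)))
    (p : Fin n → ℝ) (hp : ∀ i, p i = Real.exp (-(βS * E i)) / Zt)
    (Θ : Matrix (Fin n × Fin m) (Fin n × Fin m) ℂ)
    (hΘ : Θ = ∑ i, (p i : ℂ) • (U * (outer (e i) ⊗ₖ gibbs βB HB) * Uᴴ))
    (lam : Fin n → Fin m → ℝ)
    (hlam : ∀ i j, lam i j = p i * Real.exp (-(βB * q j)) / Zpart βB HB)
    (Qg : ℝ)
    (hQg : Qg = ((HB * gibbs βB HB).trace).re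
      - ((((1 : Matrix (Fin n) (Fin n) ℂ) ⊗ₖ HB) * Θ).trace).re)
    (Wg : Fin n → ℝ) (hWg : ∀ i, Wg i = (E i - ε i) - Qg)
    (D : ℝ)
    (hD : D = (∑ i, ∑ j, lam i j * Real.log (lam i j))
      + βS * (((HSt ⊗ₖ (1 : Matrix (Fin m) (Fin m) ℂ)) * Θ).trace).re
      + βB * ((((1 : Matrix (Fin n) (Fin n) ℂ) ⊗ₖ HB) * Θ).trace).re
      + Real.log (Zpart βS HSt * Zpart βB HB))
    (ΔF : ℝ) (hΔF : ΔF = -(βS⁻¹ * Real.log (Zpart βS HSt / Zpart βS HS0))) :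
    ∑ i, (Real.exp (-(βS * ε i)) / Zpart βS HS0) * Real.exp (-(βS * Wg i))
        = Real.exp (-(βS * ΔF)) * Real.exp (-D) * Real.exp (-(Δβ * Qg))
      ∧ ∑ i, (Real.exp (-(βS * ε i)) / Zpart βS HS0) * Wg i
          ≥ ΔF + βS⁻¹ * D + (Δβ / βS) * Qg := by
  have hnE : Nonempty (Fin n) := ⟨⟨0, hn⟩⟩
  have hmE : Nonempty (Fin m) := ⟨⟨0, hm⟩⟩
  -- partition function values
  have hZBval : Zpart βB HB = ∑ j, Real.exp (-(βB * q j)) := by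
    unfold Zpart
    rw [trace_exp_eigen βB HB f q hf hfeig, Complex.ofReal_re]
  have hZS0val : Zpart βS HS0 = ∑ i, Real.exp (-(βS * ε i)) := by
    unfold Zpart
    rw [trace_exp_eigen βS HS0 e ε he heig, Complex.ofReal_re]
  have hZBpos : 0 < Zpart βB HB := by
    rw [hZBval]
    exact Finset.sum_pos (fun j _ => Real.exp_pos _) Finset.univ_nonempty
  have hZS0pos : 0 < Zpart βS HS0 := by
    rw [hZS0val]
    exact Finset.sum_pos (fun i _ => Real.exp_pos _) Finset.univ_nonempty
  -- positivity of Z_St via Mathlib's spectral theorem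
  have hZStpos : 0 < Zpart βS HSt := by
    have hb : ∀ i i', ∑ x, (starRingEnd ℂ) (hHSt.eigenvectorBasis i x)
        * (hHSt.eigenvectorBasis i' x) = if i = i' then 1 else 0 := by
      intro i i'
      have horth := hHSt.eigenvectorBasis.orthonormal
      rw [orthonormal_iff_ite] at horth
      have h := horth i i'
      simpa [PiLp.inner_apply, RCLike.inner_apply, mul_comm] using h
    have hbe : ∀ i, HSt *ᵥ (fun x => hHSt.eigenvectorBasis i x)
        = ((hHSt.eigenvalues i : ℝ) : ℂ) • (fun x => hHSt.eigenvectorBasis i x) := by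
      intro i
      have h := hHSt.mulVec_eigenvectorBasis i
      funext x
      have := congrFun h x
      simpa [Complex.real_smul] using this
    have hv : Zpart βS HSt = ∑ i, Real.exp (-(βS * hHSt.eigenvalues i)) := by
      unfold Zpart
      rw [trace_exp_eigen βS HSt _ _ hb hbe, Complex.ofReal_re]
    rw [hv]
    exact Finset.sum_pos (fun i _ => Real.exp_pos _) Finset.univ_nonempty
  -- Zt and p
  have hZtpos : 0 < Zt := by
    rw [hZt]
    exact Finset.sum_pos (fun i _ => Real.exp_pos _) Finset.univ_nonempty
  have hppos : ∀ i, 0 < p i := fun i => by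
    rw [hp]; exact div_pos (Real.exp_pos _) hZtpos
  have hpsum : ∑ i, p i = 1 := by
    simp only [hp]
    rw [← Finset.sum_div, ← hZt, div_self hZtpos.ne']
  -- Gibbs weights of the bath
  set w : Fin m → ℝ := fun j => Real.exp (-(βB * q j)) / Zpart βB HB with hw
  have hwpos : ∀ j, 0 < w j := fun j => div_pos (Real.exp_pos _) hZBpos
  have hwsum : ∑ j, w j = 1 := by
    rw [hw, ← Finset.sum_div, ← hZBval, div_self hZBpos.ne']
  -- trace of H_B against the Gibbs state
  have hTrHB : ((HB * gibbs βB HB).trace).re = ∑ j, w j * q j := by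
    unfold gibbs
    rw [Matrix.mul_smul, Matrix.trace_smul, trace_mul_exp_eigen βB HB f q hf hfeig]
    rw [smul_eq_mul, ← Complex.ofReal_inv, ← Complex.ofReal_mul, Complex.ofReal_re]
    rw [Finset.mul_sum]
    refine Finset.sum_congr rfl fun j _ => ?_
    rw [hw]
    field_simp
  -- trace of (H_St ⊗ 1) against Θ
  have hT2 : (((HSt ⊗ₖ (1 : Matrix (Fin m) (Fin m) ℂ)) * Θ).trace).re = ∑ i, p i * E i := by
    rw [hΘ, Matrix.mul_sum]
    simp_rw [Matrix.mul_smul]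
    rw [Matrix.trace_sum, Complex.re_sum]
    refine Finset.sum_congr rfl fun i _ => ?_
    rw [Matrix.trace_smul, smul_eq_mul, Complex.re_ofReal_mul, trace_kron_left, hE i]
    rfl
  -- abbreviate the bath-energy trace of Θ
  set c : ℝ := ((((1 : Matrix (Fin n) (Fin n) ℂ) ⊗ₖ HB) * Θ).trace).re with hc
  have hQgval : Qg = (∑ j, w j * q j) - c := by rw [hQg, hTrHB]
  -- logs
  have hlogp : ∀ i, Real.log (p i) = -(βS * E i) - Real.log Zt := by
    intro i
    rw [hp, Real.log_div (Real.exp_pos _).ne' hZtpos.ne', Real.log_exp]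
  have hlogw : ∀ j, Real.log (w j) = -(βB * q j) - Real.log (Zpart βB HB) := by
    intro j
    rw [hw]
    rw [Real.log_div (Real.exp_pos _).ne' hZBpos.ne', Real.log_exp]
  have hlamval : ∀ i j, lam i j = p i * w j := by
    intro i j
    rw [hlam, hw, mul_div_assoc]
  -- entropy sum
  have hSL : (∑ i, ∑ j, lam i j * Real.log (lam i j))
      = (-(βS * (∑ i, p i * E i)) - Real.log Zt)
        + (-(βB * (∑ j, w j * q j)) - Real.log (Zpart βB HB)) := by
    have h1 : ∀ i j, lam i j * Real.log (lam i j)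
        = (p i * Real.log (p i)) * w j + p i * (w j * Real.log (w j)) := by
      intro i j
      rw [hlamval, Real.log_mul (hppos i).ne' (hwpos j).ne']
      ring
    have h2 : ∀ i, (∑ j, lam i j * Real.log (lam i j))
        = p i * Real.log (p i) + p i * (∑ j, w j * Real.log (w j)) := by
      intro i
      simp_rw [h1 i]
      rw [Finset.sum_add_distrib, ← Finset.mul_sum, ← Finset.mul_sum, hwsum, mul_one]
    simp_rw [h2]
    rw [Finset.sum_add_distrib, ← Finset.sum_mul, hpsum, one_mul]
    have h3 : ∑ i, p i * Real.log (p i) = -(βS * ∑ i, p i * E i) - Real.log Zt := by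
      have h3a : ∀ i, p i * Real.log (p i) = -(βS * (p i * E i)) - p i * Real.log Zt := by
        intro i; rw [hlogp i]; ring
      simp_rw [h3a]
      rw [Finset.sum_sub_distrib, ← Finset.sum_mul, hpsum, one_mul,
        Finset.sum_neg_distrib, ← Finset.mul_sum]
    have h4 : ∑ j, w j * Real.log (w j)
        = -(βB * ∑ j, w j * q j) - Real.log (Zpart βB HB) := by
      have h4a : ∀ j, w j * Real.log (w j)
          = -(βB * (w j * q j)) - w j * Real.log (Zpart βB HB) := by
        intro j; rw [hlogw j]; ring
      simp_rw [h4a]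
      rw [Finset.sum_sub_distrib, ← Finset.sum_mul, hwsum, one_mul,
        Finset.sum_neg_distrib, ← Finset.mul_sum]
    rw [h3, h4]
  -- the key value of D
  have hDval : D = Real.log (Zpart βS HSt) - Real.log Zt - βB * Qg := by
    rw [hD, hSL, hT2, hQgval, Real.log_mul hZStpos.ne' hZBpos.ne']
    ring
  -- exponentials
  have hexpD : Real.exp (-D) = Zt / Zpart βS HSt * Real.exp (βB * Qg) := by
    rw [hDval, show -(Real.log (Zpart βS HSt) - Real.log Zt - βB * Qg)
      = (Real.log Zt - Real.log (Zpart βS HSt)) + βB * Qg by ring]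
    rw [Real.exp_add, Real.exp_sub, Real.exp_log hZtpos, Real.exp_log hZStpos]
  have hexpF : Real.exp (-(βS * ΔF)) = Zpart βS HSt / Zpart βS HS0 := by
    rw [hΔF, show -(βS * -(βS⁻¹ * Real.log (Zpart βS HSt / Zpart βS HS0)))
      = (βS * βS⁻¹) * Real.log (Zpart βS HSt / Zpart βS HS0) by ring]
    rw [mul_inv_cancel₀ hβS.ne', one_mul, Real.exp_log (div_pos hZStpos hZS0pos)]
  -- the equality
  have hEq : ∑ i, (Real.exp (-(βS * ε i)) / Zpart βS HS0) * Real.exp (-(βS * Wg i))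
      = Real.exp (-(βS * ΔF)) * Real.exp (-D) * Real.exp (-(Δβ * Qg)) := by
    have hterm : ∀ i, (Real.exp (-(βS * ε i)) / Zpart βS HS0) * Real.exp (-(βS * Wg i))
        = Real.exp (-(βS * E i)) * Real.exp (βS * Qg) / Zpart βS HS0 := by
      intro i
      rw [hWg i, div_mul_eq_mul_div]
      congr 1
      rw [← Real.exp_add, ← Real.exp_add]
      congr 1
      ring
    simp_rw [hterm]
    rw [← Finset.sum_div, ← Finset.sum_mul, ← hZt, hexpF, hexpD, hΔβ]
    have hee : Real.exp (βB * Qg) * Real.exp (-((βB - βS) * Qg)) = Real.exp (βS * Qg) := by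
      rw [← Real.exp_add]; congr 1; ring
    field_simp
    have hee' : Real.exp (Qg * βB) * Real.exp (-(Qg * (βB - βS))) = Real.exp (βS * Qg) := by
      rw [mul_comm Qg, mul_comm Qg]; exact hee
    linear_combination (-1 : ℝ) * hee'
  refine ⟨hEq, ?_⟩
  -- Jensen's inequality
  have hPsum : ∑ i, Real.exp (-(βS * ε i)) / Zpart βS HS0 = 1 := by
    rw [← Finset.sum_div, ← hZS0val, div_self hZS0pos.ne']
  have hJ := convexOn_exp.map_sum_le (t := Finset.univ)
    (w := fun i => Real.exp (-(βS * ε i)) / Zpart βS HS0)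
    (p := fun i => -(βS * Wg i))
    (fun i _ => le_of_lt (div_pos (Real.exp_pos _) hZS0pos)) hPsum
    (fun i _ => Set.mem_univ _)
  simp only [smul_eq_mul] at hJ
  rw [hEq] at hJ
  rw [show Real.exp (-(βS * ΔF)) * Real.exp (-D) * Real.exp (-(Δβ * Qg))
    = Real.exp (-(βS * ΔF) + -D + -(Δβ * Qg)) by rw [Real.exp_add, Real.exp_add]] at hJ
  have hle := Real.exp_le_exp.mp hJ
  have hS : ∑ i, (Real.exp (-(βS * ε i)) / Zpart βS HS0) * (-(βS * Wg i))
      = -(βS * ∑ i, (Real.exp (-(βS * ε i)) / Zpart βS HS0) * Wg i) := by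
    have ht : ∀ i, (Real.exp (-(βS * ε i)) / Zpart βS HS0) * (-(βS * Wg i))
        = -(βS * ((Real.exp (-(βS * ε i)) / Zpart βS HS0) * Wg i)) := by
      intro i; ring
    simp_rw [ht]
    rw [Finset.sum_neg_distrib, ← Finset.mul_sum]
  rw [hS] at hle
  rw [ge_iff_le, ← mul_le_mul_iff_right₀ hβS]
  have hkey : βS * (ΔF + βS⁻¹ * D + Δβ / βS * Qg) = βS * ΔF + D + Δβ * Qg := by
    field_simp
  rw [hkey]
  linarith
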